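/- Let M be positive semidefinite, X ∈ ℝ^{n×p} with XᵀMX = I_p, and Y ∈ ℝ^{n×p} with all eigenvalues of YᵀMY in [5/6, 7/6]. Let f be differentiable with sup over the unit ball around X of ‖∇f‖_F at most H, and suppose β ≥ 6H(‖X‖_F + 1). Then f(A(Y)) + (β/4)‖YᵀMY − I_p‖_F² − f(R(Y)) ≥ (β/8)‖YᵀMY − I_p‖_F², where A(Y) := Y((3/2)I_p − (1/2)YᵀMY) and R(Y) := Y(YᵀMY)^{-1/2}, provided ‖Y‖_F ≤ ‖X‖_F + 1 and A(Y), R(Y) lie in the closed unit ball around X. -/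

import Mathlib

open Matrix

attribute [local instance] Matrix.frobeniusNormedAddCommGroup Matrix.frobeniusNormedSpace

/-- The square root of a positive semidefinite matrix, as `Matrix.PosSemidef.sqrt` was defined
in Mathlib (December 2024, where it was stated for any `RCLike` field;
only the real case is needed here); it has since been removed from Mathlib. -/
noncomputable def Matrix.PosSemidef.sqrt {n : Type*} [Fintype n] [DecidableEq n]
    {A : Matrix n n ℝ} (hA : A.PosSemidef) : Matrix n n ℝ :=
  hA.1.eigenvectorUnitary.1 * diagonal ((fun x => Real.sqrt x) ∘ hA.1.eigenvalues) *
    (star hA.1.eigenvectorUnitary : Matrix n n ℝ)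

lemma frob_sq {m p : ℕ} (A : Matrix (Fin m) (Fin p) ℝ) : ‖A‖ ^ 2 = (Aᵀ * A).trace := by
  have h : ‖A‖ ^ 2 = ∑ i, ∑ j, ‖A i j‖ ^ (2 : ℝ) := by
    rw [Matrix.frobenius_norm_def, ← Real.rpow_natCast _ 2,
      ← Real.rpow_mul (by positivity)]
    norm_num
  have h2 : ∀ x : ℝ, ‖x‖ ^ (2 : ℝ) = x ^ 2 := fun x => by
    rw [show (2 : ℝ) = ((2 : ℕ) : ℝ) by norm_num, Real.rpow_natCast, Real.norm_eq_abs, sq_abs]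
  rw [h, Matrix.trace, Finset.sum_comm]
  simp only [Matrix.diag, Matrix.mul_apply, Matrix.transpose_apply, h2]
  simp [sq]

lemma frob_conj {p : ℕ} {u : Matrix (Fin p) (Fin p) ℝ}
    (hu : u ∈ Matrix.unitaryGroup (Fin p) ℝ) (B : Matrix (Fin p) (Fin p) ℝ) :
    ‖u * B * star u‖ = ‖B‖ := by
  have hst : star u = uᵀ := by
    rw [Matrix.star_eq_conjTranspose, Matrix.conjTranspose_eq_transpose_of_trivial]
  have h1 : uᵀ * u = 1 := by rw [← hst]; exact Matrix.mem_unitaryGroup_iff'.mp hu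
  have hsq : ‖u * B * star u‖ ^ 2 = ‖B‖ ^ 2 := by
    rw [frob_sq, frob_sq, hst]
    have hmat : (u * B * uᵀ)ᵀ * (u * B * uᵀ) = u * (Bᵀ * B) * uᵀ := by
      simp only [Matrix.transpose_mul, Matrix.transpose_transpose, mul_assoc]
      rw [show uᵀ * (u * (B * uᵀ)) = B * uᵀ by rw [← mul_assoc, h1, one_mul]]
    rw [hmat, Matrix.trace_mul_cycle, ← mul_assoc, h1, one_mul]
  have := congrArg Real.sqrt hsq
  rwa [Real.sqrt_sq (norm_nonneg _), Real.sqrt_sq (norm_nonneg _)] at this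

lemma frob_diag {p : ℕ} (v : Fin p → ℝ) : ‖Matrix.diagonal v‖ ^ 2 = ∑ i, v i ^ 2 := by
  rw [frob_sq, Matrix.diagonal_transpose, Matrix.diagonal_mul_diagonal, Matrix.trace_diagonal]
  simp [sq]

lemma scalar_key {x : ℝ} (h1 : 5/6 ≤ x) (h2 : x ≤ 7/6) :
    ((Real.sqrt x)⁻¹ - 3/2 + x/2) ^ 2 ≤ (9/16) * ((x - 1) ^ 2) ^ 2 := by
  set t := Real.sqrt x with htdef
  have ht0 : 0 < t := Real.sqrt_pos.mpr (by linarith)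
  have ht2 : t ^ 2 = x := Real.sq_sqrt (by linarith)
  have htl : (5/6 : ℝ) ≤ t := by nlinarith
  have htu : t ≤ (7/6 : ℝ) := by nlinarith
  have hrw : t⁻¹ - 3/2 + x/2 = (1 - (3/2)*t + t^3/2) / t := by
    rw [← ht2]; field_simp
  rw [hrw, div_pow]
  rw [div_le_iff₀ (by positivity)]
  have ha : (25/36:ℝ) ≤ t^2 := by nlinarith
  have hb : ((11/6:ℝ))^4 ≤ (t+1)^4 :=
    pow_le_pow_left₀ (by norm_num) (by linarith) 4
  have hq : 4*(t+2)^2 ≤ 9*t^2*(t+1)^4 := by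
    nlinarith [mul_le_mul ha hb (by positivity) (by positivity)]
  have hkey : (1 - (3/2)*t + t^3/2)^2 ≤ (9/16) * (t^2*((t^2-1)^2)^2) := by
    nlinarith [mul_le_mul_of_nonneg_left hq (by positivity : (0:ℝ) ≤ (t-1)^4)]
  calc (1 - (3/2)*t + t^3/2)^2 ≤ (9/16) * (t^2*((t^2-1)^2)^2) := hkey
    _ = 9/16 * ((t^2 - 1)^2)^2 * t^2 := by ring
    _ = 9/16 * ((x - 1)^2)^2 * t^2 := by rw [ht2]

/-- Decrease of the SLEP penalty under generalized orthogonalization: with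
`A(Y) := Y((3/2)I − (1/2)YᵀMY)`, `R(Y) := Y(YᵀMY)^{-1/2}`, feasible `X`, eigenvalues of
`YᵀMY` in `[5/6,7/6]`, `sup_{𝔹(X,1)}‖∇f‖_F ≤ H`, `β ≥ 6H(‖X‖_F + 1)`, `‖Y‖_F ≤ ‖X‖_F + 1`
and `A(Y), R(Y) ∈ 𝔹(X,1)`, one has
`f(A(Y)) + (β/4)‖YᵀMY − I‖_F² − f(R(Y)) ≥ (β/8)‖YᵀMY − I‖_F²`. -/
theorem stmt_13 {n p : ℕ} (M : Matrix (Fin n) (Fin n) ℝ) (hM : M.PosSemidef)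
    (X Y : Matrix (Fin n) (Fin p) ℝ)
    (hX : Xᵀ * M * X = 1)
    (hS : (Yᵀ * M * Y).PosSemidef)
    (heig : ∀ i, hS.1.eigenvalues i ∈ Set.Icc (5 / 6 : ℝ) (7 / 6))
    (f : Matrix (Fin n) (Fin p) ℝ → ℝ) (hf : Differentiable ℝ f)
    (H β : ℝ)
    (hH : ∀ Z ∈ Metric.closedBall X 1, @Norm.norm _ ContinuousLinearMap.hasOpNorm (fderiv ℝ f Z) ≤ H)
    (hβ : 6 * H * (‖X‖ + 1) ≤ β)
    (hY : ‖Y‖ ≤ ‖X‖ + 1)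
    (hA : Y * ((3 / 2 : ℝ) • (1 : Matrix (Fin p) (Fin p) ℝ) - (1 / 2 : ℝ) • (Yᵀ * M * Y))
        ∈ Metric.closedBall X 1)
    (hR : Y * (hS.sqrt)⁻¹ ∈ Metric.closedBall X 1) :
    (β / 8) * ‖Yᵀ * M * Y - 1‖ ^ 2
      ≤ f (Y * ((3 / 2 : ℝ) • (1 : Matrix (Fin p) (Fin p) ℝ) - (1 / 2 : ℝ) • (Yᵀ * M * Y)))
        + (β / 4) * ‖Yᵀ * M * Y - 1‖ ^ 2
        - f (Y * (hS.sqrt)⁻¹) := by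
  classical
  set d : Fin p → ℝ := hS.1.eigenvalues with hd
  set u : Matrix (Fin p) (Fin p) ℝ := (hS.1.eigenvectorUnitary : Matrix (Fin p) (Fin p) ℝ)
    with hu_def
  have hu : u ∈ Matrix.unitaryGroup (Fin p) ℝ := hS.1.eigenvectorUnitary.2
  have h2 : u * star u = 1 := Matrix.mem_unitaryGroup_iff.mp hu
  have h1 : star u * u = 1 := Matrix.mem_unitaryGroup_iff'.mp hu
  have hspec : Yᵀ * M * Y = u * Matrix.diagonal d * star u := by
    have := hS.1.spectral_theorem
    simpa [RCLike.ofReal_real_eq_id, Function.id_comp] using this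
  -- conjugation helpers
  have e1 : ∀ (c : ℝ) (v : Fin p → ℝ),
      c • (u * Matrix.diagonal v * star u) = u * Matrix.diagonal (c • v) * star u := by
    intro c v
    rw [Matrix.diagonal_smul, Matrix.mul_smul, Matrix.smul_mul]
  have e2 : ∀ v w : Fin p → ℝ,
      u * Matrix.diagonal v * star u - u * Matrix.diagonal w * star u
        = u * Matrix.diagonal (fun i => v i - w i) * star u := by
    intro v w
    rw [← Matrix.sub_mul, ← Matrix.mul_sub, Matrix.diagonal_sub]
  have e3 : ∀ v w : Fin p → ℝ,
      u * Matrix.diagonal v * star u + u * Matrix.diagonal w * star u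
        = u * Matrix.diagonal (fun i => v i + w i) * star u := by
    intro v w
    rw [← Matrix.add_mul, ← Matrix.mul_add, Matrix.diagonal_add]
  have hone : (1 : Matrix (Fin p) (Fin p) ℝ)
      = u * Matrix.diagonal (fun _ => (1:ℝ)) * star u := by
    rw [Matrix.diagonal_one, mul_one, h2]
  have hconj : ∀ v w : Fin p → ℝ,
      (u * Matrix.diagonal v * star u) * (u * Matrix.diagonal w * star u)
        = u * Matrix.diagonal (fun i => v i * w i) * star u := by
    intro v w
    calc (u * Matrix.diagonal v * star u) * (u * Matrix.diagonal w * star u)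
        = u * (Matrix.diagonal v * ((star u * u) * (Matrix.diagonal w * star u))) := by
          simp only [mul_assoc]
      _ = u * Matrix.diagonal v * Matrix.diagonal w * star u := by
          rw [h1, one_mul]; simp only [mul_assoc]
      _ = u * Matrix.diagonal (fun i => v i * w i) * star u := by
          rw [mul_assoc u, Matrix.diagonal_mul_diagonal]
  have hd56 : ∀ i, 5/6 ≤ d i := fun i => (heig i).1
  have hd76 : ∀ i, d i ≤ 7/6 := fun i => (heig i).2
  have hsqrt : hS.sqrt = u * Matrix.diagonal (fun i => Real.sqrt (d i)) * star u := by
    unfold Matrix.PosSemidef.sqrt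
    simp [RCLike.ofReal_real_eq_id, Function.comp_def]
    rfl
  have hinv : (hS.sqrt)⁻¹ = u * Matrix.diagonal (fun i => (Real.sqrt (d i))⁻¹) * star u := by
    apply Matrix.inv_eq_right_inv
    rw [hsqrt, hconj]
    have : (fun i => Real.sqrt (d i) * (Real.sqrt (d i))⁻¹) = fun _ => (1:ℝ) := by
      funext i
      exact mul_inv_cancel₀ (ne_of_gt (Real.sqrt_pos.mpr (by linarith [hd56 i])))
    rw [this, Matrix.diagonal_one, mul_one, h2]
  set g : Fin p → ℝ := fun i => (Real.sqrt (d i))⁻¹ - 3/2 + d i / 2 with hg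
  -- difference identity
  have hC : Y * (hS.sqrt)⁻¹
      - Y * ((3 / 2 : ℝ) • (1 : Matrix (Fin p) (Fin p) ℝ) - (1 / 2 : ℝ) • (Yᵀ * M * Y))
      = Y * (u * Matrix.diagonal g * star u) := by
    rw [← Matrix.mul_sub]
    congr 1
    rw [hinv, hspec, hone, e1, e1]
    rw [show ∀ A B C : Matrix (Fin p) (Fin p) ℝ, A - (B - C) = (A + C) - B from
      fun A B C => by abel]
    rw [e3, e2]
    exact congrArg (fun v => u * Matrix.diagonal v * star u)
      (funext fun i => by simp [hg, Pi.smul_apply, smul_eq_mul]; ring)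
  set c : ℝ := ‖Yᵀ * M * Y - 1‖ ^ 2 with hc
  have hc0 : 0 ≤ c := by positivity
  have hcsum : c = ∑ i, (d i - 1) ^ 2 := by
    have hS1 : Yᵀ * M * Y - 1 = u * Matrix.diagonal (fun i => d i - 1) * star u := by
      rw [hspec, hone, e2]
    rw [hc, hS1, frob_conj hu]
    exact frob_diag _
  -- bound on the correction matrix
  have hsum : ∑ i, g i ^ 2 ≤ (9/16) * (∑ i, (d i - 1) ^ 2) ^ 2 := by
    calc ∑ i, g i ^ 2 ≤ ∑ i, (9/16) * ((d i - 1) ^ 2) ^ 2 :=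
          Finset.sum_le_sum fun i _ => scalar_key (hd56 i) (hd76 i)
      _ = (9/16) * ∑ i, ((d i - 1) ^ 2) ^ 2 := by rw [Finset.mul_sum]
      _ ≤ (9/16) * (∑ i, (d i - 1) ^ 2) ^ 2 := by
          have := Finset.sum_sq_le_sq_sum_of_nonneg
            (s := Finset.univ) (f := fun i => (d i - 1) ^ 2)
            (fun i _ => sq_nonneg _)
          linarith
  have hCnorm : ‖u * Matrix.diagonal g * star u‖ ≤ (3/4) * c := by
    have hdg : ‖u * Matrix.diagonal g * star u‖ ^ 2 ≤ ((3/4) * c) ^ 2 := by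
      rw [frob_conj hu, frob_diag, hcsum]
      nlinarith [hsum]
    calc ‖u * Matrix.diagonal g * star u‖
        = Real.sqrt (‖u * Matrix.diagonal g * star u‖ ^ 2) :=
          (Real.sqrt_sq (norm_nonneg _)).symm
      _ ≤ Real.sqrt (((3/4) * c) ^ 2) := Real.sqrt_le_sqrt hdg
      _ = (3/4) * c := Real.sqrt_sq (by positivity)
  -- mean value theorem
  have hlip : ‖f (Y * (hS.sqrt)⁻¹)
      - f (Y * ((3 / 2 : ℝ) • (1 : Matrix (Fin p) (Fin p) ℝ) - (1 / 2 : ℝ) • (Yᵀ * M * Y)))‖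
      ≤ H * ‖Y * (hS.sqrt)⁻¹
      - Y * ((3 / 2 : ℝ) • (1 : Matrix (Fin p) (Fin p) ℝ) - (1 / 2 : ℝ) • (Yᵀ * M * Y))‖ :=
    (convex_closedBall X 1).norm_image_sub_le_of_norm_fderiv_le
      (fun z _ => hf.differentiableAt) hH hA hR
  have hRA : ‖Y * (hS.sqrt)⁻¹
      - Y * ((3 / 2 : ℝ) • (1 : Matrix (Fin p) (Fin p) ℝ) - (1 / 2 : ℝ) • (Yᵀ * M * Y))‖
      ≤ (‖X‖ + 1) * ((3/4) * c) := by
    rw [hC]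
    calc ‖Y * (u * Matrix.diagonal g * star u)‖
        ≤ ‖Y‖ * ‖u * Matrix.diagonal g * star u‖ := Matrix.frobenius_norm_mul _ _
      _ ≤ (‖X‖ + 1) * ((3/4) * c) := by
          apply mul_le_mul hY hCnorm (norm_nonneg _) (by positivity)
  have hH0 : 0 ≤ H :=
    le_trans (norm_nonneg _) (hH X (Metric.mem_closedBall_self (by norm_num)))
  have hfd : f (Y * (hS.sqrt)⁻¹)
      - f (Y * ((3 / 2 : ℝ) • (1 : Matrix (Fin p) (Fin p) ℝ) - (1 / 2 : ℝ) • (Yᵀ * M * Y)))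
      ≤ H * ((‖X‖ + 1) * ((3/4) * c)) := by
    have := le_trans (le_abs_self _) hlip
    have h' := mul_le_mul_of_nonneg_left hRA hH0
    linarith
  have hfin : H * ((‖X‖ + 1) * ((3/4) * c)) ≤ (β / 8) * c := by
    nlinarith [mul_nonneg hc0 (sub_nonneg.mpr hβ)]
  linarith
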